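/- arXiv:1512.05706 — 2 statements merged into one kernel-verified Lean document; each statement's English description precedes it below -/
import Mathlib

section
/- Let Ω ⊂ ℝ^n be a bounded open set, let μ be a positive finite Radon measure on Ω, and suppose there exists a nonempty open ball B ⊆ Ω with μ(B) = 0. Then every v ∈ W^{1,1}_μ(Ω) satisfies |Dv|(B) = 0 and is hence ℒ^n-a.e. constant on B. Consequently, for any nonconstant u ∈ C^1_c(B) (extended by zero to Ω), there exists no sequence (u_j) ⊆ W^{1,1}_μ(Ω) with u_j → u in L^1(Ω), and therefore F_*(u,Ω) = +∞ for any integrand F. -/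
open MeasureTheory Filter Topology Metric Set

noncomputable section

/-- Euclidean space `ℝ^n`. -/
abbrev Rn (n : ℕ) := EuclideanSpace ℝ (Fin n)
/-- Euclidean space `ℝ^N` (the target space). -/
abbrev RNs (N : ℕ) := EuclideanSpace ℝ (Fin N)
/-- The matrix space `ℝ^{N×n}` with the Euclidean (Frobenius) norm. -/
abbrev Mat (N n : ℕ) := EuclideanSpace ℝ (Fin N × Fin n)

/-- The tensor product `a ⊗ b = a bᵀ ∈ ℝ^{N×n}`. -/
def tens {N n : ℕ} (a : RNs N) (b : Rn n) : Mat N n :=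
  (WithLp.equiv 2 _).symm (fun p : Fin N × Fin n => a p.1 * b p.2)

/-- A finite `E`-valued (Radon) measure on `ℝ^n`, represented by a positive base measure
together with an integrable density, so that the measure of a set `A` is `∫_A dens d(base)`. -/
structure VMeas (n : ℕ) (E : Type*) [NormedAddCommGroup E] [NormedSpace ℝ E] where
  base : Measure (Rn n)
  dens : Rn n → E
  integrable : Integrable dens base

namespace VMeas

variable {n : ℕ} {E : Type*} [NormedAddCommGroup E] [NormedSpace ℝ E]

/-- The value of the vector measure on a set. -/
def app (γ : VMeas n E) (A : Set (Rn n)) : E := ∫ x in A, γ.dens x ∂γ.base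

/-- The total variation measure `|γ|`. -/
def tv (γ : VMeas n E) : Measure (Rn n) :=
  γ.base.withDensity fun x => (‖γ.dens x‖₊ : ENNReal)

end VMeas

/-- `u ∈ BV(Ω; ℝ^N)` with derivative measure `Du`: `u` is integrable on `Ω`, `Du` is a finite
matrix-valued measure concentrated on `Ω`, and the integration-by-parts formula holds. -/
def IsBV {n N : ℕ} (Ω : Set (Rn n)) (u : Rn n → RNs N) (Du : VMeas n (Mat N n)) : Prop :=
  IntegrableOn u Ω volume ∧ Du.tv Ωᶜ = 0 ∧
  ∀ ψ : Rn n → ℝ, ContDiff ℝ 1 ψ → HasCompactSupport ψ → tsupport ψ ⊆ Ω →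
    ∀ (i : Fin N) (j : Fin n),
      ∫ x in Ω, fderiv ℝ ψ x (EuclideanSpace.single j (1:ℝ)) * u x i ∂volume
        = - ∫ x, ψ x * Du.dens x (i, j) ∂Du.base

/-- The Radon–Nikodym decomposition `γ = g μ + σ` of a vector measure `γ` with respect to a
positive measure `μ`: `σ` is the singular part, whose base measure is its total variation
(i.e. its density has norm one a.e.) and is mutually singular with `μ`. -/
def IsDecomp {n : ℕ} {E : Type*} [NormedAddCommGroup E] [NormedSpace ℝ E]
    (γ : VMeas n E) (μ : Measure (Rn n)) (g : Rn n → E) (σ : VMeas n E) : Prop :=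
  Integrable g μ ∧ σ.base.MutuallySingular μ ∧ (∀ᵐ x ∂σ.base, ‖σ.dens x‖ = 1) ∧
  ∀ A : Set (Rn n), MeasurableSet A → γ.app A = (∫ x in A, g x ∂μ) + σ.app A

/-- The matrix of partial derivatives `(∂ψ^i/∂x_j)` of a map `ψ : ℝ^n → ℝ^N` at a point. -/
def gradMat {N n : ℕ} (ψ : Rn n → RNs N) (x : Rn n) : Mat N n :=
  (WithLp.equiv 2 _).symm
    (fun p : Fin N × Fin n => fderiv ℝ ψ x (EuclideanSpace.single p.2 (1:ℝ)) p.1)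

/-- Quasiconvexity of `F : ℝ^{N×n} → ℝ`, tested (as one equivalently may) on the unit ball as
the Lipschitz domain, against Lipschitz test maps vanishing outside the ball (`W_0^{1,∞}`). -/
def QuasiconvexFn {N n : ℕ} (F : Mat N n → ℝ) : Prop :=
  ∀ (A : Mat N n) (ψ : Rn n → RNs N) (C : NNReal), LipschitzWith C ψ →
    (∀ x ∉ Metric.ball (0 : Rn n) 1, ψ x = 0) →
    (volume (Metric.ball (0 : Rn n) 1)).toReal * F A ≤
      ∫ x in Metric.ball (0 : Rn n) 1, F (A + gradMat ψ x) ∂volume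

/-- `Fi` is the recession function of `F`: `Fi A = lim_{A'→A, t→∞} F(tA')/t`. -/
def HasRecession {E : Type*} [NormedAddCommGroup E] [NormedSpace ℝ E]
    (F Fi : E → ℝ) : Prop :=
  ∀ A : E, Tendsto (fun p : E × ℝ => F (p.2 • p.1) / p.2) ((𝓝 A) ×ˢ atTop) (𝓝 (Fi A))

/-- The generalized recession function `F^#(A) = limsup_{A'→A, t→∞} F(tA')/t`. -/
def recSharp {E : Type*} [NormedAddCommGroup E] [NormedSpace ℝ E] (F : E → ℝ) (A : E) : ℝ :=
  limsup (fun p : E × ℝ => F (p.2 • p.1) / p.2) ((𝓝 A) ×ˢ atTop)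

/-- The relaxed functional `F_*(u, Ω)` with respect to `μ`: the infimum (in `[0,∞]`, so `+∞` if
there is no admissible sequence) over all sequences `v_j ∈ W^{1,1}_μ(Ω;ℝ^N)` (i.e. BV functions
whose derivative measure is `g_j μ`) converging to `u` in `L^1(Ω;ℝ^N)`, of
`liminf_j ∫_Ω F(dDv_j/dμ) dμ`. -/
def relaxed {n N : ℕ} (Ω : Set (Rn n)) (μ : Measure (Rn n)) (F : Mat N n → ℝ)
    (u : Rn n → RNs N) : ENNReal :=
  ⨅ (v : ℕ → Rn n → RNs N) (g : ℕ → Rn n → Mat N n)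
    (_ : ∀ j, ∃ h : Integrable (g j) μ, IsBV Ω (v j) ⟨μ, g j, h⟩)
    (_ : Tendsto (fun j => ∫ x in Ω, ‖v j x - u x‖ ∂volume) atTop (𝓝 0)),
    liminf (fun j => ENNReal.ofReal (∫ x in Ω, F (g j x) ∂μ)) atTop

/-- `g` is the bounded continuous extension of the transform `Tf` to `cl(Ω) × cl(𝔹)`, where
`(Tf)(x,Â) = (1-|Â|) f(x, Â/(1-|Â|))`. -/
def IsTExtension {n : ℕ} {E : Type*} [NormedAddCommGroup E] [NormedSpace ℝ E]
    (Ω : Set (Rn n)) (f g : Rn n × E → ℝ) : Prop :=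
  ContinuousOn g (closure Ω ×ˢ Metric.closedBall (0 : E) 1) ∧
  (∃ M : ℝ, ∀ p ∈ closure Ω ×ˢ Metric.closedBall (0 : E) 1, |g p| ≤ M) ∧
  ∀ x ∈ Ω, ∀ A ∈ Metric.ball (0 : E) 1, g (x, A) = (1 - ‖A‖) * f (x, (1 - ‖A‖)⁻¹ • A)

/-- The class `E(Ω; E)` of integrands: continuous functions on `Ω × E` whose transform `Tf`
extends to a bounded continuous function on `cl(Ω × 𝔹)`. -/
def MemE {n : ℕ} {E : Type*} [NormedAddCommGroup E] [NormedSpace ℝ E]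
    (Ω : Set (Rn n)) (f : Rn n × E → ℝ) : Prop :=
  ContinuousOn f (Ω ×ˢ (Set.univ : Set E)) ∧ ∃ g, IsTExtension Ω f g

/-- `fi` is the recession function of the `x`-dependent integrand `f`: for every `x ∈ cl(Ω)`
and every `A`, `f(x', tA')/t → fi(x,A)` as `x' → x` (within `Ω`), `A' → A` and `t → ∞`. -/
def IsRecessionOn {n : ℕ} {E : Type*} [NormedAddCommGroup E] [NormedSpace ℝ E]
    (Ω : Set (Rn n)) (f fi : Rn n × E → ℝ) : Prop :=
  ∀ x ∈ closure Ω, ∀ A : E,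
    Tendsto (fun q : (Rn n × E) × ℝ => f (q.1.1, q.2 • q.1.2) / q.2)
      (((𝓝[Ω] x) ×ˢ (𝓝 A)) ×ˢ atTop) (𝓝 (fi (x, A)))

/-- A generalized Young measure `ν = (ν_x, λ_ν, ν_x^∞) ∈ Y(Ω, μ; E)`: a weakly* `μ`-measurable
family `(ν_x)` of probability measures on `E` with `x ↦ ∫ |A| dν_x ∈ L^1(μ)`, a positive finite
measure `λ_ν` on `cl(Ω)`, and a weakly* `λ_ν`-measurable family `(ν_x^∞)` of probability
measures carried by the unit sphere of `E`. -/
structure Young (n : ℕ) (E : Type*) [NormedAddCommGroup E] [NormedSpace ℝ E]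
    [MeasurableSpace E] (Ω : Set (Rn n)) (μ : Measure (Rn n)) where
  osc : Rn n → Measure E
  osc_prob : ∀ x, IsProbabilityMeasure (osc x)
  osc_meas : ∀ B : Set E, MeasurableSet B → AEMeasurable (fun x => (osc x B).toReal) μ
  osc_int : Integrable (fun x => ∫ A, ‖A‖ ∂osc x) μ
  lam : Measure (Rn n)
  lam_fin : IsFiniteMeasure lam
  lam_supp : lam (closure Ω)ᶜ = 0
  jet : Rn n → Measure E
  jet_prob : ∀ x, IsProbabilityMeasure (jet x)
  jet_meas : ∀ B : Set E, MeasurableSet B → AEMeasurable (fun x => (jet x B).toReal) lam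
  jet_sphere : ∀ x, jet x {A : E | ‖A‖ = 1}ᶜ = 0

/-- The duality pairing `⟨⟨f, ν⟩⟩` of an integrand `f` (with recession function `fi`) with a
generalized Young measure `ν`. -/
def Young.pair {n : ℕ} {E : Type*} [NormedAddCommGroup E] [NormedSpace ℝ E]
    [MeasurableSpace E] {Ω : Set (Rn n)} {μ : Measure (Rn n)}
    (ν : Young n E Ω μ) (f fi : Rn n × E → ℝ) : ℝ :=
  (∫ x in Ω, ∫ A, f (x, A) ∂ν.osc x ∂μ) + ∫ x, ∫ A, fi (x, A) ∂ν.jet x ∂ν.lam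

/-- The pairing `⟨⟨f, ε_γ⟩⟩` of an integrand with the elementary Young measure associated to a
vector measure `γ` with Radon–Nikodym decomposition `γ = g μ + σ` with respect to `μ`. -/
def elemPair {n : ℕ} {E : Type*} [NormedAddCommGroup E] [NormedSpace ℝ E]
    (Ω : Set (Rn n)) (μ : Measure (Rn n)) (g : Rn n → E) (σ : VMeas n E)
    (f fi : Rn n × E → ℝ) : ℝ :=
  (∫ x in Ω, f (x, g x) ∂μ) + ∫ x, fi (x, σ.dens x) ∂σ.base

/-- The sequence of vector measures `γ_j` (with decompositions `γ_j = g_j μ + σ_j` w.r.t. `μ`)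
generates the generalized Young measure `ν`: `⟨⟨f, ε_{γ_j}⟩⟩ → ⟨⟨f, ν⟩⟩` for all `f ∈ E(Ω;E)`. -/
def Generates {n : ℕ} {E : Type*} [NormedAddCommGroup E] [NormedSpace ℝ E] [MeasurableSpace E]
    (Ω : Set (Rn n)) (μ : Measure (Rn n)) (g : ℕ → Rn n → E) (σ : ℕ → VMeas n E)
    (ν : Young n E Ω μ) : Prop :=
  ∀ f fi : Rn n × E → ℝ, MemE Ω f → IsRecessionOn Ω f fi →
    Tendsto (fun j => elemPair Ω μ (g j) (σ j) f fi) atTop (𝓝 (ν.pair f fi))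

/-- `ν` is a gradient Young measure (w.r.t. `μ`): it is generated by the derivatives of a
norm-bounded sequence in `BV(Ω;ℝ^N)`. -/
def IsGradientYM {n N : ℕ} (Ω : Set (Rn n)) (μ : Measure (Rn n))
    (ν : Young n (Mat N n) Ω μ) : Prop :=
  ∃ (u : ℕ → Rn n → RNs N) (Du : ℕ → VMeas n (Mat N n))
    (g : ℕ → Rn n → Mat N n) (σ : ℕ → VMeas n (Mat N n)),
    (∀ j, IsBV Ω (u j) (Du j)) ∧ (∀ j, IsDecomp (Du j) μ (g j) (σ j)) ∧
    (∃ C : ℝ, ∀ j, (∫ x in Ω, ‖u j x‖ ∂volume) + ((Du j).tv Set.univ).toReal ≤ C) ∧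
    Generates Ω μ g σ ν

/-- The barycenter of the Young measure `ν`, restricted to `Ω`, is the vector measure `Du`. -/
def HasBarycenter {n N : ℕ} (Ω : Set (Rn n)) (μ : Measure (Rn n))
    (ν : Young n (Mat N n) Ω μ) (Du : VMeas n (Mat N n)) : Prop :=
  ∀ A : Set (Rn n), MeasurableSet A → A ⊆ Ω →
    ((∫ x in A, (∫ B, B ∂ν.osc x) ∂μ) + ∫ x in A, (∫ B, B ∂ν.jet x) ∂ν.lam) = Du.app A

/-- `Ω` is a bounded Lipschitz domain: it is open, bounded, and near every boundary point it is
the region above the graph of a Lipschitz function over a hyperplane. -/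
def IsLipschitzDomain {n : ℕ} (Ω : Set (Rn n)) : Prop :=
  IsOpen Ω ∧ Bornology.IsBounded Ω ∧
  ∀ x ∈ frontier Ω, ∃ (v : Rn n) (L : NNReal) (ρ : ℝ) (φ : Rn n → ℝ),
    ‖v‖ = 1 ∧ 0 < ρ ∧ LipschitzWith L φ ∧ φ 0 = 0 ∧
    ∀ z ∈ Metric.ball x ρ,
      (z ∈ Ω ↔ φ (z - x - (inner ℝ (z - x) v : ℝ) • v) < (inner ℝ (z - x) v : ℝ))

/-- Membership in `C_0(Ω)`: continuous on `Ω` and arbitrarily small outside compact subsets. -/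
def MemC0 {n : ℕ} (Ω : Set (Rn n)) (φ : Rn n → ℝ) : Prop :=
  ContinuousOn φ Ω ∧ ∀ ε > 0, ∃ K : Set (Rn n), K ⊆ Ω ∧ IsCompact K ∧
    ∀ x ∈ Ω \ K, |φ x| < ε

/-- `Tu` is the boundary trace of `u ∈ BV(Ω;ℝ^N)` (with inner boundary normal `nor`): the zero
extension of `u` to `ℝ^n` is of bounded variation with derivative
`Du + (Tu ⊗ nor) H^{n-1}⌞∂Ω`, expressed via integration by parts. -/
def HasTrace {n N : ℕ} (Ω : Set (Rn n)) (u : Rn n → RNs N) (Du : VMeas n (Mat N n))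
    (Tu : Rn n → RNs N) (nor : Rn n → Rn n) : Prop :=
  Integrable Tu ((μH[(n:ℝ) - 1] : Measure (Rn n)).restrict (frontier Ω)) ∧
  ∀ ψ : Rn n → ℝ, ContDiff ℝ 1 ψ → HasCompactSupport ψ →
    ∀ (i : Fin N) (j : Fin n),
      ∫ x in Ω, fderiv ℝ ψ x (EuclideanSpace.single j (1:ℝ)) * u x i ∂volume
        = - (∫ x, ψ x * Du.dens x (i, j) ∂Du.base)
          - ∫ x in frontier Ω, ψ x * (Tu x i * nor x j) ∂(μH[(n:ℝ) - 1] : Measure (Rn n))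

open scoped Classical in
/-- The Dirichlet class `BV_u(Ω;ℝ^N)`: `v` such that `w = (v - u) 1_Ω ∈ BV(ℝ^n;ℝ^N)` with
`|Dw|(∂Ω) = 0`. -/
def MemDirichlet {n N : ℕ} (Ω : Set (Rn n)) (u v : Rn n → RNs N) : Prop :=
  ∃ Dw : VMeas n (Mat N n),
    IsBV Set.univ (fun x => if x ∈ Ω then v x - u x else 0) Dw ∧ Dw.tv (frontier Ω) = 0

/-- The area measure `⟨γ⟩` of a vector measure with decomposition `γ = a ℒ^n⌞Ω + γ^s`:
`⟨γ⟩(A) = ∫_A √(1+|a|²) dℒ^n + |γ^s|(A)`. -/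
def areaMeasure {n : ℕ} {E : Type*} [NormedAddCommGroup E] [NormedSpace ℝ E]
    (Ω : Set (Rn n)) (a : Rn n → E) (σ : VMeas n E) : Measure (Rn n) :=
  (volume.restrict Ω).withDensity (fun x => ENNReal.ofReal (Real.sqrt (1 + ‖a x‖ ^ 2))) + σ.base
open scoped Convolution

/-- A continuous linear functional on `ℝ^n` vanishing on the basis vectors is zero. -/
lemma clm_eq_zero_of_single {n : ℕ} (T : Rn n →L[ℝ] ℝ)
    (h : ∀ j : Fin n, T (EuclideanSpace.single j (1:ℝ)) = 0) : T = 0 := by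
  apply ContinuousLinearMap.coe_injective
  apply Module.Basis.ext (EuclideanSpace.basisFun (Fin n) ℝ).toBasis
  intro j
  simpa [EuclideanSpace.basisFun_apply] using h j

lemma ae_const_of_pairing_zero {n : ℕ} (y : Rn n) (r : ℝ) (hr : 0 < r)
    (w : Rn n → ℝ) (hw : Integrable w volume)
    (hpair : ∀ ψ : Rn n → ℝ, ContDiff ℝ 1 ψ → HasCompactSupport ψ →
      tsupport ψ ⊆ Metric.ball y r →
      ∀ j : Fin n, ∫ x, fderiv ℝ ψ x (EuclideanSpace.single j (1:ℝ)) * w x ∂volume = 0) :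
    ∃ c : ℝ, ∀ᵐ x ∂(volume.restrict (Metric.ball y r)), w x = c := by
  classical
  set L : ℝ →L[ℝ] ℝ →L[ℝ] ℝ := (ContinuousLinearMap.lsmul ℝ ℝ).flip with hL
  -- the bump family
  have hrp : ∀ i : ℕ, (0:ℝ) < r / (i + 2) := fun i => by positivity
  let φ : ℕ → ContDiffBump (0 : Rn n) := fun i =>
    ⟨r / (2 * (i + 2)), r / (i + 2), by positivity, by
      rw [div_lt_div_iff₀ (by positivity) (by positivity)]
      nlinarith [hrp i]⟩
  have hφout : ∀ i, (φ i).rOut = r / (i+2) := fun i => rfl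
  let ρ : ℕ → Rn n → ℝ := fun i => (φ i).normed volume
  let conv : ℕ → Rn n → ℝ := fun i => (φ i).normed volume ⋆[ContinuousLinearMap.lsmul ℝ ℝ, volume] w
  have hconv : ∀ i, conv i = w ⋆[L, volume] ρ i := fun i => (convolution_flip ..).symm
  have hwloc : LocallyIntegrable w volume := hw.locallyIntegrable
  -- derivative of the convolution vanishes on the shrunken ball
  have hconst : ∀ i, ∀ x₁ ∈ ball y (r - (φ i).rOut), ∀ x₂ ∈ ball y (r - (φ i).rOut),
      conv i x₁ = conv i x₂ := by
    intro i x₁ hx₁ x₂ hx₂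
    have hρc : ContDiff ℝ 1 (ρ i) := (φ i).contDiff_normed
    have hρs : HasCompactSupport (ρ i) := by
      apply HasCompactSupport.intro (isCompact_closedBall (0 : Rn n) (φ i).rOut)
      intro x hx
      have := (φ i).support_normed_eq (μ := volume)
      by_contra h
      exact hx (ball_subset_closedBall (this ▸ Function.mem_support.2 h))
    have hder : ∀ x : Rn n, HasFDerivAt (conv i)
        ((w ⋆[L.precompR (Rn n), volume] fderiv ℝ (ρ i)) x) x := by
      intro x
      rw [hconv]
      exact hρs.hasFDerivAt_convolution_right L hwloc hρc x
    have hzero : ∀ x ∈ ball y (r - (φ i).rOut),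
        (w ⋆[L.precompR (Rn n), volume] fderiv ℝ (ρ i)) x = 0 := by
      intro x hx
      apply clm_eq_zero_of_single
      intro j
      have happ := convolution_precompR_apply (L := L) hwloc (hρs.fderiv ℝ)
        (hρc.continuous_fderiv one_ne_zero) x (EuclideanSpace.single j (1:ℝ))
      rw [happ]
      -- define the test function ψ
      set ψ : Rn n → ℝ := fun z => ρ i (x - z) with hψ
      have hψc : ContDiff ℝ 1 ψ := hρc.comp (contDiff_const.sub contDiff_id)
      have hψsupp : Function.support ψ ⊆ ball x (φ i).rOut := by
        intro z hz
        have : x - z ∈ Function.support (ρ i) := Function.mem_support.2 hz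
        rw [(φ i).support_normed_eq] at this
        simp only [mem_ball, dist_zero_right] at this
        rw [mem_ball, dist_eq_norm, norm_sub_rev]
        simpa [mem_ball, dist_zero_right] using this
      have hψcs : HasCompactSupport ψ := by
        apply HasCompactSupport.intro (isCompact_closedBall x (φ i).rOut)
        intro z hz
        by_contra h
        exact hz (ball_subset_closedBall (hψsupp (Function.mem_support.2 h)))
      have hψts : tsupport ψ ⊆ ball y r := by
        refine subset_trans
          (closure_minimal (hψsupp.trans ball_subset_closedBall) isClosed_closedBall) ?_
        intro z hz
        simp only [mem_closedBall, mem_ball] at hz ⊢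
        have hxy : dist x y < r - (φ i).rOut := by simpa [mem_ball] using hx
        calc dist z y ≤ dist z x + dist x y := dist_triangle _ _ _
          _ < (φ i).rOut + (r - (φ i).rOut) := add_lt_add_of_le_of_lt hz hxy
          _ = r := by ring
      have hfd : ∀ z : Rn n, fderiv ℝ ψ z (EuclideanSpace.single j (1:ℝ))
          = - fderiv ℝ (ρ i) (x - z) (EuclideanSpace.single j (1:ℝ)) := by
        intro z
        have h1 : HasFDerivAt (fun z : Rn n => x - z) (-(ContinuousLinearMap.id ℝ (Rn n))) z :=
          (hasFDerivAt_id z).const_sub x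
        have h2 : HasFDerivAt (ρ i) (fderiv ℝ (ρ i) (x - z)) (x - z) :=
          ((hρc.differentiable one_ne_zero) (x - z)).hasFDerivAt
        have h3 : HasFDerivAt ψ
            ((fderiv ℝ (ρ i) (x - z)).comp (-(ContinuousLinearMap.id ℝ (Rn n)))) z :=
          h2.comp z h1
        rw [h3.fderiv]
        simp
      have key := hpair ψ hψc hψcs hψts j
      rw [show (fun z => fderiv ℝ ψ z (EuclideanSpace.single j (1:ℝ)) * w z)
          = fun z => -(fderiv ℝ (ρ i) (x - z) (EuclideanSpace.single j (1:ℝ)) * w z) from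
          funext fun z => by rw [hfd z]; ring] at key
      rw [integral_neg] at key
      have key2 : ∫ z, fderiv ℝ (ρ i) (x - z) (EuclideanSpace.single j (1:ℝ)) * w z ∂volume = 0 :=
        by linarith [key]
      rw [convolution_def]
      simp only [hL, ContinuousLinearMap.flip_apply, ContinuousLinearMap.lsmul_apply,
        smul_eq_mul]
      rw [← key2]
    -- constancy on the convex shrunken ball
    have hconvex : Convex ℝ (ball y (r - (φ i).rOut)) := convex_ball y _
    refine hconvex.is_const_of_fderivWithin_eq_zero (𝕜 := ℝ)
      (fun z hz => ((hder z).differentiableAt).differentiableWithinAt) ?_ hx₁ hx₂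
    intro z hz
    rw [fderivWithin_of_isOpen isOpen_ball hz, (hder z).fderiv, hzero z hz]
  -- a.e. convergence of the mollification
  have hout0 : Tendsto (fun i : ℕ => (φ i).rOut) atTop (𝓝 0) := by
    simp only [hφout]
    have : Tendsto (fun i : ℕ => ((i:ℝ) + 2)) atTop atTop :=
      tendsto_atTop_add_const_right _ 2 tendsto_natCast_atTop_atTop
    exact Tendsto.div_atTop tendsto_const_nhds this
  have hae := ContDiffBump.ae_convolution_tendsto_right_of_locallyIntegrable
    (φ := φ) (l := atTop) (K := 2) hout0
    (Eventually.of_forall fun i => by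
      rw [hφout]
      show r / (i + 2) ≤ 2 * (r / (2 * (i + 2)))
      have h2 : ((i:ℝ) + 2) ≠ 0 := by positivity
      rw [show (2:ℝ) * (r / (2 * ((i:ℝ) + 2))) = r / ((i:ℝ) + 2) from by
        field_simp]) hwloc
  -- pick a base point
  have hpos : volume (ball y r) ≠ 0 := (measure_ball_pos volume y hr).ne'
  set G : Set (Rn n) := {x | Tendsto (fun i => conv i x) atTop (𝓝 (w x))} with hG
  have hGc : volume Gᶜ = 0 := by
    have := ae_iff.1 hae
    simpa [hG, Set.compl_setOf] using this
  have hGball : volume (G ∩ ball y r) ≠ 0 := by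
    intro h0
    have : volume (ball y r) ≤ volume Gᶜ + volume (G ∩ ball y r) := by
      calc volume (ball y r) ≤ volume ((Gᶜ) ∪ (G ∩ ball y r)) := by
            apply measure_mono
            intro x hx
            by_cases hxG : x ∈ G
            · exact Or.inr ⟨hxG, hx⟩
            · exact Or.inl hxG
        _ ≤ _ := measure_union_le _ _
    rw [hGc, h0, add_zero] at this
    exact hpos (le_antisymm this (zero_le))
  obtain ⟨x₀, hx₀G, hx₀b⟩ := MeasureTheory.nonempty_of_measure_ne_zero hGball
  refine ⟨w x₀, ?_⟩
  have hmem := ae_restrict_mem (μ := volume) (measurableSet_ball (x := y) (ε := r))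
  have haeG : ∀ᵐ x ∂(volume.restrict (ball y r)), x ∈ G :=
    ae_restrict_of_ae (hae.mono fun x hx => hx)
  filter_upwards [hmem, haeG] with x hxb hxG
  -- both x and x₀ are eventually in the shrunken ball
  have hev : ∀ᶠ i in atTop, conv i x = conv i x₀ := by
    have h1 : (0:ℝ) < r - dist x y := sub_pos.2 (mem_ball.1 hxb)
    have h2 : (0:ℝ) < r - dist x₀ y := sub_pos.2 (mem_ball.1 hx₀b)
    have := hout0.eventually (eventually_lt_nhds (lt_min h1 h2))
    filter_upwards [this] with i hi
    apply hconst i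
    · rw [mem_ball]; have := lt_of_lt_of_le hi (min_le_left _ _); linarith
    · rw [mem_ball]; have := lt_of_lt_of_le hi (min_le_right _ _); linarith
  have t1 : Tendsto (fun i => conv i x) atTop (𝓝 (w x)) := hxG
  have t2 : Tendsto (fun i => conv i x) atTop (𝓝 (w x₀)) :=
    Tendsto.congr' (hev.mono fun i h => h.symm) hx₀G
  exact tendsto_nhds_unique t1 t2

/-- **Example: failure of approximation when `ℒ^n ≪ μ` fails** (Example 3.8): if `μ` vanishes
on an open ball `B = B(y,r) ⊆ Ω`, then every `v ∈ W^{1,1}_μ(Ω)` has `|Dv|(B) = 0` and is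
`ℒ^n`-a.e. constant on `B`; consequently, for a nonconstant `u ∈ C¹_c(B)` there is no sequence
in `W^{1,1}_μ(Ω)` converging to `u` in `L¹(Ω)`, and `F_*(u,Ω) = +∞` for any integrand `F`. -/
theorem no_approximation_of_vanishing_mu {n : ℕ} (Ω : Set (Rn n)) (hΩo : IsOpen Ω)
    (hΩb : Bornology.IsBounded Ω)
    (μ : Measure (Rn n)) [IsFiniteMeasure μ] (hμΩ : μ Ωᶜ = 0)
    (y : Rn n) (r : ℝ) (hr : 0 < r) (hball : Metric.ball y r ⊆ Ω)
    (hμB : μ (Metric.ball y r) = 0) :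
    (∀ (v : Rn n → RNs 1) (g : Rn n → Mat 1 n) (h : Integrable g μ),
      IsBV Ω v (⟨μ, g, h⟩ : VMeas n (Mat 1 n)) →
        (VMeas.tv ⟨μ, g, h⟩ (Metric.ball y r) = 0 ∧
          ∃ c : RNs 1, ∀ᵐ x ∂(volume.restrict (Metric.ball y r)), v x = c)) ∧
    ∀ u : Rn n → RNs 1, ContDiff ℝ 1 u → HasCompactSupport u →
      tsupport u ⊆ Metric.ball y r →
      (¬ ∀ x ∈ Metric.ball y r, ∀ x' ∈ Metric.ball y r, u x = u x') →
      (¬ ∃ (v : ℕ → Rn n → RNs 1) (g : ℕ → Rn n → Mat 1 n),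
          (∀ j, ∃ h : Integrable (g j) μ, IsBV Ω (v j) ⟨μ, g j, h⟩) ∧
          Tendsto (fun j => ∫ x in Ω, ‖v j x - u x‖ ∂volume) atTop (𝓝 0)) ∧
      ∀ F : Mat 1 n → ℝ, relaxed Ω μ F u = ⊤ := by
  classical
  have hΩm : MeasurableSet Ω := hΩo.measurableSet
  have part1 : ∀ (v : Rn n → RNs 1) (g : Rn n → Mat 1 n) (h : Integrable g μ),
      IsBV Ω v (⟨μ, g, h⟩ : VMeas n (Mat 1 n)) →
        (VMeas.tv ⟨μ, g, h⟩ (Metric.ball y r) = 0 ∧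
          ∃ c : RNs 1, ∀ᵐ x ∂(volume.restrict (Metric.ball y r)), v x = c) := by
    intro v g h hBV
    obtain ⟨hint, htv, hibp⟩ := hBV
    constructor
    · show (μ.withDensity _) (Metric.ball y r) = 0
      rw [withDensity_apply _ measurableSet_ball]
      exact setLIntegral_measure_zero _ _ hμB
    · set w : Rn n → ℝ := Set.indicator Ω (fun z => v z 0) with hwdef
      have hwint : Integrable w volume := by
        rw [integrable_indicator_iff hΩm]
        exact (EuclideanSpace.proj (0 : Fin 1) : RNs 1 →L[ℝ] ℝ).integrable_comp hint
      have hpair : ∀ ψ : Rn n → ℝ, ContDiff ℝ 1 ψ → HasCompactSupport ψ →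
          tsupport ψ ⊆ Metric.ball y r →
          ∀ j : Fin n, ∫ x, fderiv ℝ ψ x (EuclideanSpace.single j (1:ℝ)) * w x ∂volume = 0 := by
        intro ψ hc hcs hts j
        have h1 := hibp ψ hc hcs (hts.trans hball) 0 j
        have h2 : ∫ x, ψ x * g x (0, j) ∂μ = 0 := by
          apply integral_eq_zero_of_ae
          have hb : ∀ᵐ x ∂μ, x ∉ Metric.ball y r := by
            rw [ae_iff]
            simpa using measure_mono_null (fun x hx => by simpa using hx) hμB
          filter_upwards [hb] with x hx
          have hψ0 : ψ x = 0 := by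
            by_contra hne
            exact hx (hts (subset_tsupport ψ (Function.mem_support.2 hne)))
          simp [hψ0]
        have h3 : ∫ x, fderiv ℝ ψ x (EuclideanSpace.single j (1:ℝ)) * w x ∂volume
            = ∫ x in Ω, fderiv ℝ ψ x (EuclideanSpace.single j (1:ℝ)) * v x 0 ∂volume := by
          rw [← integral_indicator hΩm]
          congr 1
          funext x
          by_cases hx : x ∈ Ω
          · simp [hwdef, Set.indicator_of_mem hx]
          · simp [hwdef, Set.indicator_of_notMem hx]
        rw [h3, h1, h2, neg_zero]
      obtain ⟨c0, hc0⟩ := ae_const_of_pairing_zero y r hr w hwint hpair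
      refine ⟨(WithLp.equiv 2 (Fin 1 → ℝ)).symm (fun _ => c0), ?_⟩
      filter_upwards [hc0, ae_restrict_mem (μ := volume) measurableSet_ball] with x hx hxb
      have hxΩ : x ∈ Ω := hball hxb
      have hwx : w x = v x 0 := Set.indicator_of_mem hxΩ _
      refine PiLp.ext fun i => ?_
      have : i = 0 := Subsingleton.elim i 0
      subst this
      exact hwx.symm.trans hx
  refine ⟨part1, ?_⟩
  intro u huC huCS huts hnc
  have huint : Integrable u volume := huC.continuous.integrable_of_hasCompactSupport huCS
  have hno : ¬ ∃ (v : ℕ → Rn n → RNs 1) (g : ℕ → Rn n → Mat 1 n),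
      (∀ j, ∃ h : Integrable (g j) μ, IsBV Ω (v j) ⟨μ, g j, h⟩) ∧
      Tendsto (fun j => ∫ x in Ω, ‖v j x - u x‖ ∂volume) atTop (𝓝 0) := by
    rintro ⟨v, g, hvg, hconv⟩
    push_neg at hnc
    obtain ⟨x₁, hx₁, x₂, hx₂, hne⟩ := hnc
    have hc : ∀ j, ∃ c : RNs 1, ∀ᵐ x ∂(volume.restrict (Metric.ball y r)), v j x = c := by
      intro j
      obtain ⟨h, hBV⟩ := hvg j
      exact (part1 (v j) (g j) h hBV).2
    choose c hcae using hc
    have hvint : ∀ j, IntegrableOn (v j) Ω volume := fun j => (hvg j).choose_spec.1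
    have key : ∀ x₀ ∈ Metric.ball y r, Tendsto c atTop (𝓝 (u x₀)) := by
      intro x₀ hx₀
      rw [Metric.tendsto_atTop]
      intro ε hε
      obtain ⟨δ, hδpos, hδ⟩ := Metric.continuous_iff.1 huC.continuous x₀ (ε/3) (by positivity)
      set s : ℝ := min δ (r - dist x₀ y) with hsdef
      have hspos : 0 < s := lt_min hδpos (sub_pos.2 (mem_ball.1 hx₀))
      have hsub : Metric.ball x₀ s ⊆ Metric.ball y r := by
        intro z hz
        rw [mem_ball] at hz ⊢
        have h1 : dist z x₀ < r - dist x₀ y := lt_of_lt_of_le hz (min_le_right _ _)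
        calc dist z y ≤ dist z x₀ + dist x₀ y := dist_triangle _ _ _
          _ < r := by linarith
      set V : ℝ := (volume (Metric.ball x₀ s)).toReal with hVdef
      have hVpos : 0 < V :=
        ENNReal.toReal_pos (measure_ball_pos volume x₀ hspos).ne' measure_ball_lt_top.ne
      have hIj : ∀ᶠ j in atTop, (∫ x in Ω, ‖v j x - u x‖ ∂volume) < (ε/3) * V := by
        apply hconv.eventually_lt_const
        positivity
      have hbound : ∀ j, dist (c j) (u x₀) * V ≤
          (∫ x in Ω, ‖v j x - u x‖ ∂volume) + (ε/3) * V := by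
        intro j
        have hae1 : ∀ᵐ z ∂(volume.restrict (Metric.ball x₀ s)), v j z = c j :=
          ae_restrict_of_ae_restrict_of_subset hsub (hcae j)
        have hnint : IntegrableOn (fun z => ‖v j z - u z‖) Ω volume :=
          ((hvint j).sub huint.integrableOn).norm
        have hnint' : IntegrableOn (fun z => ‖v j z - u z‖) (Metric.ball x₀ s) volume :=
          MeasureTheory.IntegrableOn.mono_set hnint (hsub.trans hball)
        have hints : IntegrableOn (fun z => ‖v j z - u z‖ + ε/3) (Metric.ball x₀ s) volume :=
          hnint'.add (integrableOn_const measure_ball_lt_top.ne)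
        have hle : ∀ᵐ z ∂(volume.restrict (Metric.ball x₀ s)),
            dist (c j) (u x₀) ≤ ‖v j z - u z‖ + ε/3 := by
          filter_upwards [hae1, ae_restrict_mem (μ := volume) measurableSet_ball] with z hz hzb
          have h1 : dist (c j) (u z) = ‖v j z - u z‖ := by rw [← hz, dist_eq_norm, norm_sub_rev]
          have h2 : dist (u z) (u x₀) ≤ ε/3 :=
            le_of_lt (hδ z (lt_of_lt_of_le (mem_ball.1 hzb) (min_le_left _ _)))
          calc dist (c j) (u x₀) ≤ dist (c j) (u z) + dist (u z) (u x₀) := dist_triangle _ _ _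
            _ ≤ ‖v j z - u z‖ + ε/3 := by rw [h1]; linarith
        have hmono := integral_mono_ae (μ := volume.restrict (Metric.ball x₀ s))
          (integrableOn_const (C := dist (c j) (u x₀)) measure_ball_lt_top.ne) hints hle
        rw [setIntegral_const] at hmono
        have hsplit : ∫ z in Metric.ball x₀ s, (‖v j z - u z‖ + ε/3) ∂volume
            = (∫ z in Metric.ball x₀ s, ‖v j z - u z‖ ∂volume) + (ε/3) * V := by
          rw [integral_add hnint' (integrableOn_const measure_ball_lt_top.ne),
            setIntegral_const, smul_eq_mul, mul_comm]
          rfl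
        have hmset : (∫ z in Metric.ball x₀ s, ‖v j z - u z‖ ∂volume)
            ≤ ∫ x in Ω, ‖v j x - u x‖ ∂volume := by
          apply setIntegral_mono_set hnint
          · exact Eventually.of_forall fun z => norm_nonneg _
          · exact HasSubset.Subset.eventuallyLE (hsub.trans hball)
        rw [hsplit] at hmono
        rw [smul_eq_mul, mul_comm] at hmono
        have hVr : volume.real (Metric.ball x₀ s) = V := rfl
        rw [hVr] at hmono
        linarith
      obtain ⟨N, hN⟩ := eventually_atTop.1 hIj
      refine ⟨N, fun j hjN => ?_⟩
      have hb := hbound j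
      have hj := hN j hjN
      nlinarith [hb, hj, hVpos]
    exact hne (tendsto_nhds_unique (key x₁ hx₁) (key x₂ hx₂))
  refine ⟨hno, ?_⟩
  intro F
  rw [relaxed]
  refine iInf_eq_top.2 fun v => iInf_eq_top.2 fun g => ?_
  by_cases hP : ∀ j, ∃ h : Integrable (g j) μ, IsBV Ω (v j) ⟨μ, g j, h⟩
  · have hQ : ¬ Tendsto (fun j => ∫ x in Ω, ‖v j x - u x‖ ∂volume) atTop (𝓝 0) :=
      fun hQ => hno ⟨v, g, hP, hQ⟩
    rw [iInf_pos hP, iInf_neg hQ]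
  · rw [iInf_neg hP]

end
end

section
/- Let Ω ⊂ ℝ^n be a bounded open set and let f ∈ E(Ω;ℝ^l), with \overline{Tf} denoting the bounded continuous extension of Tf to the closure of Ω×𝔹^l. Then for every x in the closure of Ω and every A ∈ ℝ^l, the limit f^∞(x,A) := lim f(x',tA')/t (as x'→x, A'→A, t→∞) exists and is finite; f^∞(x,A) = \overline{Tf}(x,A) for all A in the unit sphere ∂𝔹^l; and f^∞ is positively 1-homogeneous in A, i.e. f^∞(x,sA) = s f^∞(x,A) for all s ≥ 0. -/
open MeasureTheory Filter Topology Metric Set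

noncomputable section

/-- **Existence and properties of the recession function for `f ∈ E(Ω;ℝ^l)`**: if `Tf` has a
bounded continuous extension `G` to `cl(Ω × 𝔹^l)`, then for every `x ∈ cl(Ω)` and `A ∈ ℝ^l`
the limit `f^∞(x,A) = lim f(x',tA')/t` (as `x'→x`, `A'→A`, `t→∞`) exists and is finite; it
agrees with `G` on `cl(Ω) × ∂𝔹^l`; and it is positively 1-homogeneous in `A`. -/
theorem recession_of_memE {n l : ℕ} (Ω : Set (Rn n)) (hΩo : IsOpen Ω)
    (hΩb : Bornology.IsBounded Ω)
    (f G : Rn n × RNs l → ℝ)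
    (hf : ContinuousOn f (Ω ×ˢ (Set.univ : Set (RNs l))))
    (hext : IsTExtension Ω f G) :
    ∃ fi : Rn n × RNs l → ℝ,
      IsRecessionOn Ω f fi ∧
      (∀ x ∈ closure Ω, ∀ A : RNs l, ‖A‖ = 1 → fi (x, A) = G (x, A)) ∧
      (∀ x ∈ closure Ω, ∀ A : RNs l, ∀ s : ℝ, 0 ≤ s → fi (x, s • A) = s * fi (x, A)) := by

  obtain ⟨hGc, ⟨M, hM⟩, hTf⟩ := hext
  set S : Set (Rn n × RNs l) := closure Ω ×ˢ Metric.closedBall (0 : RNs l) 1 with hS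
  -- key algebraic identity
  have key : ∀ x' ∈ Ω, ∀ (A' : RNs l) (t : ℝ), 0 < t →
      f (x', t • A') / t = (t⁻¹ + ‖A'‖) * G (x', (t⁻¹ + ‖A'‖)⁻¹ • A') ∧
        (x', (t⁻¹ + ‖A'‖)⁻¹ • A') ∈ S := by
    intro x' hx' A' t ht
    set d : ℝ := t⁻¹ + ‖A'‖ with hd
    have hd0 : 0 < d := add_pos_of_pos_of_nonneg (inv_pos.2 ht) (norm_nonneg _)
    have hnorm : ‖d⁻¹ • A'‖ = d⁻¹ * ‖A'‖ := by
      rw [norm_smul, Real.norm_of_nonneg (le_of_lt (inv_pos.2 hd0))]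
    have hlt : ‖d⁻¹ • A'‖ < 1 := by
      rw [hnorm, inv_mul_eq_div, div_lt_one hd0]
      exact lt_add_of_pos_left _ (inv_pos.2 ht)
    have hball : d⁻¹ • A' ∈ Metric.ball (0 : RNs l) 1 := by
      rwa [mem_ball_zero_iff]
    have hone : 1 - ‖d⁻¹ • A'‖ = (d * t)⁻¹ := by
      rw [hnorm, mul_inv]
      have htt : d⁻¹ * t⁻¹ = d⁻¹ * (d - ‖A'‖) := by rw [hd]; ring
      rw [htt, mul_sub, inv_mul_cancel₀ (ne_of_gt hd0)]
    have hGeq := hTf x' hx' _ hball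
    rw [hone] at hGeq
    have hresc : ((d * t)⁻¹)⁻¹ • d⁻¹ • A' = t • A' := by
      rw [inv_inv, smul_smul]
      congr 1
      field_simp
    rw [hresc] at hGeq
    constructor
    · rw [hGeq, div_eq_inv_mul]
      field_simp
    · exact ⟨subset_closure hx', mem_closedBall_zero_iff.2 (le_of_lt hlt)⟩
  refine ⟨fun p => ‖p.2‖ * G (p.1, ‖p.2‖⁻¹ • p.2), ?_, ?_, ?_⟩
  · -- IsRecessionOn
    intro x hx A
    have hM0 : 0 ≤ M := le_trans (abs_nonneg _) (hM (x, 0) ⟨hx, by simp⟩)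
    -- eventual key facts
    have hev : ∀ᶠ q : (Rn n × RNs l) × ℝ in ((𝓝[Ω] x) ×ˢ (𝓝 A)) ×ˢ atTop,
        f (q.1.1, q.2 • q.1.2) / q.2
          = (q.2⁻¹ + ‖q.1.2‖) * G (q.1.1, (q.2⁻¹ + ‖q.1.2‖)⁻¹ • q.1.2) ∧
        (q.1.1, (q.2⁻¹ + ‖q.1.2‖)⁻¹ • q.1.2) ∈ S := by
      have h1 : ∀ᶠ q : (Rn n × RNs l) × ℝ in ((𝓝[Ω] x) ×ˢ (𝓝 A)) ×ˢ atTop,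
          q.1.1 ∈ Ω := by
        have : ∀ᶠ y in 𝓝[Ω] x, y ∈ Ω := eventually_mem_nhdsWithin
        exact (this.prod_inl (𝓝 A)).prod_inl atTop
      have h2 : ∀ᶠ q : (Rn n × RNs l) × ℝ in ((𝓝[Ω] x) ×ˢ (𝓝 A)) ×ˢ atTop,
          (1:ℝ) ≤ q.2 := (eventually_ge_atTop (1:ℝ)).prod_inr _
      filter_upwards [h1, h2] with q hq1 hq2
      exact key q.1.1 hq1 q.1.2 q.2 (zero_lt_one.trans_le hq2)
    -- the tendsto of d
    have ht1 : Tendsto (fun q : (Rn n × RNs l) × ℝ => (q.2)⁻¹)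
        (((𝓝[Ω] x) ×ˢ (𝓝 A)) ×ˢ atTop) (𝓝 0) :=
      tendsto_inv_atTop_zero.comp tendsto_snd
    have ht2 : Tendsto (fun q : (Rn n × RNs l) × ℝ => q.1.2)
        (((𝓝[Ω] x) ×ˢ (𝓝 A)) ×ˢ atTop) (𝓝 A) :=
      tendsto_snd.comp tendsto_fst
    have hd : Tendsto (fun q : (Rn n × RNs l) × ℝ => (q.2)⁻¹ + ‖q.1.2‖)
        (((𝓝[Ω] x) ×ˢ (𝓝 A)) ×ˢ atTop) (𝓝 ‖A‖) := by
      have := ht1.add ht2.norm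
      simpa using this
    rcases eq_or_ne A 0 with rfl | hA0
    · -- limit zero
      have h0 : (fun p : Rn n × RNs l => ‖p.2‖ * G (p.1, ‖p.2‖⁻¹ • p.2)) (x, (0:RNs l)) = 0 := by
        simp
      rw [h0]
      have hbound : ∀ᶠ q : (Rn n × RNs l) × ℝ in ((𝓝[Ω] x) ×ˢ (𝓝 (0:RNs l))) ×ˢ atTop,
          ‖f (q.1.1, q.2 • q.1.2) / q.2‖ ≤ ((q.2)⁻¹ + ‖q.1.2‖) * M := by
        filter_upwards [hev, (eventually_ge_atTop (1:ℝ)).prod_inr _] with q hq ht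
        have hq2 : (0:ℝ) ≤ (q.2)⁻¹ := inv_nonneg.2 (by linarith)
        have hdn : (0:ℝ) ≤ (q.2)⁻¹ + ‖q.1.2‖ := by positivity
        rw [hq.1, Real.norm_eq_abs, abs_mul, abs_of_nonneg hdn]
        exact mul_le_mul_of_nonneg_left (hM _ hq.2) hdn
      have htend : Tendsto (fun q : (Rn n × RNs l) × ℝ => ((q.2)⁻¹ + ‖q.1.2‖) * M)
          (((𝓝[Ω] x) ×ˢ (𝓝 (0:RNs l))) ×ˢ atTop) (𝓝 0) := by
        have := hd.mul_const M
        simpa using this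
      exact squeeze_zero_norm' hbound htend
    · -- limit ‖A‖ * G (x, ‖A‖⁻¹ • A)
      have hnA : ‖A‖ ≠ 0 := norm_ne_zero_iff.mpr hA0
      have hψ : Tendsto (fun q : (Rn n × RNs l) × ℝ =>
            (q.1.1, ((q.2)⁻¹ + ‖q.1.2‖)⁻¹ • q.1.2))
          (((𝓝[Ω] x) ×ˢ (𝓝 A)) ×ˢ atTop) (𝓝[S] (x, ‖A‖⁻¹ • A)) := by
        rw [tendsto_nhdsWithin_iff]
        constructor
        · apply Tendsto.prodMk_nhds
          · exact (tendsto_fst.comp tendsto_fst).mono_right nhdsWithin_le_nhds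
          · exact (hd.inv₀ hnA).smul ht2
        · filter_upwards [hev] with q hq using hq.2
      have hmemp : (x, ‖A‖⁻¹ • A) ∈ S := by
        refine ⟨hx, mem_closedBall_zero_iff.2 ?_⟩
        rw [norm_smul, Real.norm_of_nonneg (inv_nonneg.2 (norm_nonneg A)),
          inv_mul_cancel₀ hnA]
      have hGt : Tendsto (fun q : (Rn n × RNs l) × ℝ =>
            G (q.1.1, ((q.2)⁻¹ + ‖q.1.2‖)⁻¹ • q.1.2))
          (((𝓝[Ω] x) ×ˢ (𝓝 A)) ×ˢ atTop) (𝓝 (G (x, ‖A‖⁻¹ • A))) :=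
        (hGc (x, ‖A‖⁻¹ • A) hmemp).tendsto.comp hψ
      have hH : Tendsto (fun q : (Rn n × RNs l) × ℝ =>
            ((q.2)⁻¹ + ‖q.1.2‖) * G (q.1.1, ((q.2)⁻¹ + ‖q.1.2‖)⁻¹ • q.1.2))
          (((𝓝[Ω] x) ×ˢ (𝓝 A)) ×ˢ atTop) (𝓝 (‖A‖ * G (x, ‖A‖⁻¹ • A))) :=
        hd.mul hGt
      exact hH.congr' (hev.mono fun q hq => hq.1.symm)
  · -- value on the sphere
    intro x hx A hA
    simp [hA]
  · -- homogeneity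
    intro x hx A s hs
    rcases eq_or_lt_of_le hs with rfl | hs'
    · simp
    rcases eq_or_ne A 0 with rfl | hA
    · simp
    have hnA : ‖A‖ ≠ 0 := norm_ne_zero_iff.mpr hA
    have h1 : ‖s • A‖ = s * ‖A‖ := by rw [norm_smul, Real.norm_of_nonneg hs]
    have h2 : (s * ‖A‖)⁻¹ • (s • A) = ‖A‖⁻¹ • A := by
      rw [smul_smul]
      congr 1
      field_simp
    simp only [h1, h2]
    ring
end
end
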